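/- Let G be a random variable taking values in a countable set, and let S be a real random variable such that for each g with P(G = g) > 0, the conditional CDF F_{S|G=g}(s) = P(S ≤ s | G = g) is continuous in s. Define Q = F_{S|G}(S), i.e. Q(ω) = F_{S|G=G(ω)}(S(ω)). Then Q is uniformly distributed on [0,1] and Q is independent of G. -/

import Mathlib

open MeasureTheory ProbabilityTheory

open Set Filter Topology in
/-- Key lemma: probability integral transform on a single piece `A`. -/
lemma pit_key_aux {Ω : Type*} {mΩ : MeasurableSpace Ω} (μ : Measure Ω) [IsProbabilityMeasure μ]
    (S : Ω → ℝ) (hS : Measurable S) (A : Set Ω) (hA : MeasurableSet A) (hApos : 0 < μ A)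
    (f : ℝ → ℝ)
    (hf : ∀ s, f s = (μ ({ω | S ω ≤ s} ∩ A)).toReal / (μ A).toReal)
    (hcont : Continuous f) {q : ℝ} (hq0 : 0 ≤ q) (hq1 : q ≤ 1) :
    μ ({ω | f (S ω) ≤ q} ∩ A) = ENNReal.ofReal q * μ A := by
  have hAne : μ A ≠ ⊤ := measure_ne_top μ A
  set ct : ℝ := (μ A).toReal with hct_def
  have hct : 0 < ct := ENNReal.toReal_pos hApos.ne' hAne
  have hφle : ∀ s : ℝ, μ ({ω | S ω ≤ s} ∩ A) ≤ μ A := fun s =>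
    measure_mono inter_subset_right
  have hφne : ∀ s : ℝ, μ ({ω | S ω ≤ s} ∩ A) ≠ ⊤ := fun s => measure_ne_top μ _
  have hmono : Monotone f := by
    intro s t hst
    rw [hf s, hf t]
    have h1 : μ ({ω | S ω ≤ s} ∩ A) ≤ μ ({ω | S ω ≤ t} ∩ A) :=
      measure_mono (inter_subset_inter_left A (fun ω hω => le_trans hω hst))
    have h2 := ENNReal.toReal_mono (hφne t) h1
    rw [div_eq_mul_inv, div_eq_mul_inv]
    exact mul_le_mul_of_nonneg_right h2 (inv_nonneg.2 ENNReal.toReal_nonneg)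
  -- continuity from below / above
  have htop : Tendsto (fun n : ℕ => μ ({ω | S ω ≤ (n : ℝ)} ∩ A)) atTop (𝓝 (μ A)) := by
    have hmon : Monotone fun n : ℕ => {ω | S ω ≤ (n : ℝ)} ∩ A := by
      intro n m hnm
      refine inter_subset_inter_left A (fun ω hω => ?_)
      have h1 : S ω ≤ (n : ℝ) := hω
      have h2 : (n : ℝ) ≤ m := by exact_mod_cast hnm
      show S ω ≤ (m : ℝ)
      linarith
    have hU : (⋃ n : ℕ, ({ω | S ω ≤ (n : ℝ)} ∩ A)) = A := by
      ext ω
      simp only [mem_iUnion, mem_inter_iff, mem_setOf_eq]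
      constructor
      · rintro ⟨n, _, h⟩; exact h
      · intro h
        obtain ⟨n, hn⟩ := exists_nat_ge (S ω)
        exact ⟨n, hn, h⟩
    have := tendsto_measure_iUnion_atTop (μ := μ) hmon
    rwa [hU] at this
  have hbot : Tendsto (fun n : ℕ => μ ({ω | S ω ≤ -(n : ℝ)} ∩ A)) atTop (𝓝 0) := by
    have hanti : Antitone fun n : ℕ => {ω | S ω ≤ -(n : ℝ)} ∩ A := by
      intro n m hnm
      refine inter_subset_inter_left A (fun ω hω => ?_)
      have h1 : S ω ≤ -(m : ℝ) := hω
      have h2 : (n : ℝ) ≤ m := by exact_mod_cast hnm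
      show S ω ≤ -(n : ℝ)
      linarith
    have hI : (⋂ n : ℕ, ({ω | S ω ≤ -(n : ℝ)} ∩ A)) = ∅ := by
      ext ω
      simp only [mem_iInter, mem_inter_iff, mem_setOf_eq, mem_empty_iff_false, iff_false]
      intro h
      obtain ⟨n, hn⟩ := exists_nat_gt (-(S ω))
      have := (h n).1
      linarith
    have := tendsto_measure_iInter_atTop (μ := μ)
      (s := fun n : ℕ => {ω | S ω ≤ -(n : ℝ)} ∩ A)
      (fun n => ((hS measurableSet_Iic).inter hA).nullMeasurableSet) hanti
      ⟨0, measure_ne_top μ _⟩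
    rw [hI] at this
    simpa [Function.comp_def] using this
  by_cases hq1' : q = 1
  · subst hq1'
    have hsub : {ω | f (S ω) ≤ 1} = univ := by
      ext ω
      simp only [mem_setOf_eq, mem_univ, iff_true]
      rw [hf, div_le_one hct]
      exact ENNReal.toReal_mono hAne (hφle _)
    rw [hsub, univ_inter, ENNReal.ofReal_one, one_mul]
  · have hqlt : q < 1 := lt_of_le_of_ne hq1 hq1'
    -- find N with q < f N
    have htopR : Tendsto (fun n : ℕ => (μ ({ω | S ω ≤ (n : ℝ)} ∩ A)).toReal) atTop (𝓝 ct) :=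
      (ENNReal.tendsto_toReal hAne).comp htop
    have hlt : q * ct < ct := by nlinarith
    obtain ⟨N, hN⟩ := (htopR.eventually (eventually_gt_nhds hlt)).exists
    have hfN : q < f N := by
      rw [hf, lt_div_iff₀ hct]
      exact hN
    by_cases hne : {s : ℝ | f s ≤ q}.Nonempty
    · have hbdd : BddAbove {s : ℝ | f s ≤ q} := by
        refine ⟨N, fun s hs => ?_⟩
        by_contra hsN
        push_neg at hsN
        exact absurd (le_trans (hmono hsN.le) hs) (not_le.2 hfN)
      have hclosed : IsClosed {s : ℝ | f s ≤ q} := isClosed_le hcont continuous_const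
      set s₀ : ℝ := sSup {s : ℝ | f s ≤ q} with hs0_def
      have hmem : s₀ ∈ {s : ℝ | f s ≤ q} := hclosed.csSup_mem hne hbdd
      have hs0N : s₀ ≤ N := csSup_le hne (fun s hs => by
        by_contra hsN
        push_neg at hsN
        exact absurd (le_trans (hmono hsN.le) hs) (not_le.2 hfN))
      have hfs0 : f s₀ = q := by
        refine le_antisymm hmem ?_
        by_contra hlt'
        push_neg at hlt'
        obtain ⟨s₂, hs₂mem, hfs₂⟩ := intermediate_value_Icc hs0N hcont.continuousOn
          ⟨hlt'.le, hfN.le⟩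
        have hs₂le : s₂ ≤ s₀ := le_csSup hbdd (by simpa [mem_setOf_eq, hfs₂] using le_refl q)
        have : f s₂ ≤ f s₀ := hmono hs₂le
        rw [hfs₂] at this
        exact absurd this (not_le.2 hlt')
      have hsetIic : {s : ℝ | f s ≤ q} = Iic s₀ :=
        subset_antisymm (fun s hs => le_csSup hbdd hs)
          (fun s hs => le_trans (hmono hs) hmem)
      have hpre : {ω | f (S ω) ≤ q} = {ω | S ω ≤ s₀} := by
        ext ω
        have : f (S ω) ≤ q ↔ S ω ∈ {s : ℝ | f s ≤ q} := Iff.rfl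
        rw [mem_setOf_eq, this, hsetIic, mem_Iic, mem_setOf_eq]
      rw [hpre]
      have hval : (μ ({ω | S ω ≤ s₀} ∩ A)).toReal = q * ct := by
        have := hfs0
        rw [hf, div_eq_iff hct.ne'] at this
        exact this
      calc μ ({ω | S ω ≤ s₀} ∩ A)
          = ENNReal.ofReal ((μ ({ω | S ω ≤ s₀} ∩ A)).toReal) :=
            (ENNReal.ofReal_toReal (hφne s₀)).symm
        _ = ENNReal.ofReal (q * ct) := by rw [hval]
        _ = ENNReal.ofReal q * ENNReal.ofReal ct := ENNReal.ofReal_mul hq0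
        _ = ENNReal.ofReal q * μ A := by rw [hct_def, ENNReal.ofReal_toReal hAne]
    · -- empty case : q must be 0
      have hq0' : q = 0 := by
        by_contra hq
        have hqpos : 0 < q := lt_of_le_of_ne hq0 (Ne.symm hq)
        have hbotR : Tendsto (fun n : ℕ => (μ ({ω | S ω ≤ -(n : ℝ)} ∩ A)).toReal) atTop (𝓝 0) :=
          (ENNReal.tendsto_toReal (by simp)).comp hbot
        have hpos : (0 : ℝ) < q * ct := mul_pos hqpos hct
        obtain ⟨n, hn⟩ := (hbotR.eventually (eventually_lt_nhds hpos)).exists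
        refine hne ⟨-(n : ℝ), ?_⟩
        rw [mem_setOf_eq, hf, div_le_iff₀ hct]
        exact hn.le
      subst hq0'
      have hpre : {ω | f (S ω) ≤ 0} = ∅ := by
        ext ω
        simp only [mem_setOf_eq, mem_empty_iff_false, iff_false]
        intro h
        exact hne ⟨S ω, h⟩
      rw [hpre, empty_inter, measure_empty, ENNReal.ofReal_zero, zero_mul]

/-- Conditional probability integral transform with a countable umbrella factor `G`:
if each conditional CDF `F_{S|G=g}` is continuous, then `Q = F_{S|G}(S)` is uniformly
distributed on `[0,1]` and is independent of `G` (in the sense that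
`P(Q ≤ q ∧ G = g) = q · P(G = g)`). -/
theorem conditional_pit_uniform_and_indep
    {Ω : Type*} {mΩ : MeasurableSpace Ω} {μ : Measure Ω} [IsProbabilityMeasure μ]
    {D : Type*} [Countable D] [MeasurableSpace D] [MeasurableSingletonClass D]
    (G : Ω → D) (hG : Measurable G) (S : Ω → ℝ) (hS : Measurable S)
    (F : D → ℝ → ℝ)
    (hF : ∀ g s, F g s
      = (μ ({ω | S ω ≤ s} ∩ {ω | G ω = g})).toReal / (μ {ω | G ω = g}).toReal)
    (hcont : ∀ g, 0 < μ {ω | G ω = g} → Continuous (F g)) :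
    (∀ q ∈ Set.Icc (0 : ℝ) 1, ∀ g, 0 < μ {ω | G ω = g} →
        μ ({ω | F (G ω) (S ω) ≤ q} ∩ {ω | G ω = g})
          = ENNReal.ofReal q * μ {ω | G ω = g}) ∧
      Measure.map (fun ω => F (G ω) (S ω)) μ = volume.restrict (Set.Icc (0 : ℝ) 1) := by
  have hGset : ∀ g : D, MeasurableSet {ω | G ω = g} := fun g =>
    hG (measurableSet_singleton g)
  -- part 1
  have hpart1 : ∀ q ∈ Set.Icc (0 : ℝ) 1, ∀ g, 0 < μ {ω | G ω = g} →
      μ ({ω | F (G ω) (S ω) ≤ q} ∩ {ω | G ω = g})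
        = ENNReal.ofReal q * μ {ω | G ω = g} := by
    intro q hq g hg
    have hset : {ω | F (G ω) (S ω) ≤ q} ∩ {ω | G ω = g}
        = {ω | F g (S ω) ≤ q} ∩ {ω | G ω = g} := by
      ext ω
      constructor
      · rintro ⟨h1, h2⟩
        exact ⟨by rw [Set.mem_setOf_eq] at h1 h2 ⊢; rw [← h2]; exact h1, h2⟩
      · rintro ⟨h1, h2⟩
        exact ⟨by rw [Set.mem_setOf_eq] at h1 h2 ⊢; rw [h2]; exact h1, h2⟩
    rw [hset]
    exact pit_key_aux μ S hS _ (hGset g) hg (F g) (hF g) (hcont g hg) hq.1 hq.2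
  refine ⟨hpart1, ?_⟩
  -- measurability of Q
  have hFmono : ∀ g : D, Monotone (F g) := by
    intro g s t hst
    rw [hF g s, hF g t]
    have h1 : μ ({ω | S ω ≤ s} ∩ {ω | G ω = g}) ≤ μ ({ω | S ω ≤ t} ∩ {ω | G ω = g}) :=
      measure_mono (Set.inter_subset_inter_left _ (fun ω hω => le_trans hω hst))
    have h2 := ENNReal.toReal_mono (measure_ne_top μ _) h1
    rw [div_eq_mul_inv, div_eq_mul_inv]
    exact mul_le_mul_of_nonneg_right h2 (inv_nonneg.2 ENNReal.toReal_nonneg)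
  have hQmeas : Measurable fun ω => F (G ω) (S ω) := by
    have h1 : Measurable fun p : ℝ × D => F p.2 p.1 :=
      measurable_from_prod_countable_left (fun g => (hFmono g).measurable)
    exact h1.comp (hS.prodMk hG)
  -- Q takes values in [0,1]
  have hQ01 : ∀ g s, F g s ∈ Set.Icc (0 : ℝ) 1 := by
    intro g s
    rw [hF]
    constructor
    · positivity
    · by_cases h0 : μ {ω | G ω = g} = 0
      · have hz : μ ({ω | S ω ≤ s} ∩ {ω | G ω = g}) = 0 :=
          le_antisymm (le_trans (measure_mono Set.inter_subset_right) h0.le) zero_le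
        rw [hz, h0]
        norm_num
      · have hpos : 0 < (μ {ω | G ω = g}).toReal :=
          ENNReal.toReal_pos h0 (measure_ne_top μ _)
        rw [div_le_one hpos]
        exact ENNReal.toReal_mono (measure_ne_top μ _)
          (measure_mono Set.inter_subset_right)
  haveI : IsProbabilityMeasure (Measure.map (fun ω => F (G ω) (S ω)) μ) :=
    Measure.isProbabilityMeasure_map hQmeas.aemeasurable
  haveI : IsFiniteMeasure (volume.restrict (Set.Icc (0 : ℝ) 1)) := by
    constructor
    rw [Measure.restrict_apply_univ, Real.volume_Icc]
    exact ENNReal.ofReal_lt_top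
  refine Measure.ext_of_Iic _ _ (fun a => ?_)
  rw [Measure.map_apply hQmeas measurableSet_Iic, Measure.restrict_apply measurableSet_Iic]
  rcases lt_or_ge a 0 with ha | ha
  · have h1 : (fun ω => F (G ω) (S ω)) ⁻¹' Set.Iic a = ∅ := by
      ext ω
      simp only [Set.mem_preimage, Set.mem_Iic, Set.mem_empty_iff_false, iff_false, not_le]
      exact lt_of_lt_of_le ha (hQ01 (G ω) (S ω)).1
    have h2 : Set.Iic a ∩ Set.Icc (0 : ℝ) 1 = ∅ := by
      ext x
      simp only [Set.mem_inter_iff, Set.mem_Iic, Set.mem_Icc, Set.mem_empty_iff_false, iff_false]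
      rintro ⟨hx, hx0, _⟩
      linarith
    rw [h1, h2, measure_empty, measure_empty]
  · -- decompose μ over the fibers of G
    have hdisj : Pairwise (Function.onFun Disjoint fun g : D => G ⁻¹' {g}) := by
      intro g g' hgg'
      rw [Function.onFun, Set.disjoint_left]
      rintro ω h1 h2
      exact hgg' ((Set.mem_singleton_iff.1 h1).symm.trans (Set.mem_singleton_iff.1 h2))
    have hsum1 : (∑' g : D, μ (G ⁻¹' {g})) = 1 := by
      rw [← measure_iUnion hdisj (fun g => hGset g)]
      have : (⋃ g : D, G ⁻¹' {g}) = Set.univ := by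
        ext ω
        simp only [Set.mem_iUnion, Set.mem_preimage, Set.mem_singleton_iff, Set.mem_univ, iff_true]
        exact ⟨G ω, rfl⟩
      rw [this, measure_univ]
    set B : Set Ω := (fun ω => F (G ω) (S ω)) ⁻¹' Set.Iic a with hB_def
    have hBmeas : MeasurableSet B := hQmeas measurableSet_Iic
    have hBdecomp : μ B = ∑' g : D, μ (B ∩ G ⁻¹' {g}) := by
      have hdisj' : Pairwise (Function.onFun Disjoint fun g : D => B ∩ G ⁻¹' {g}) := by
        intro g g' hgg'
        exact (hdisj hgg').mono Set.inter_subset_right Set.inter_subset_right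
      rw [← measure_iUnion hdisj' (fun g => hBmeas.inter (hGset g))]
      congr 1
      ext ω
      simp only [Set.mem_iUnion, Set.mem_inter_iff, Set.mem_preimage, Set.mem_singleton_iff]
      constructor
      · intro h; exact ⟨G ω, h, rfl⟩
      · rintro ⟨g, h, _⟩; exact h
    rcases le_or_gt a 1 with ha1 | ha1
    · -- 0 ≤ a ≤ 1
      have hterm : ∀ g : D, μ (B ∩ G ⁻¹' {g}) = ENNReal.ofReal a * μ (G ⁻¹' {g}) := by
        intro g
        by_cases h0 : μ {ω | G ω = g} = 0
        · have : μ (B ∩ G ⁻¹' {g}) = 0 :=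
            le_antisymm (le_trans (measure_mono Set.inter_subset_right) h0.le) zero_le
          rw [this]
          have : μ (G ⁻¹' {g}) = 0 := h0
          rw [this, mul_zero]
        · have hg : 0 < μ {ω | G ω = g} := lt_of_le_of_ne zero_le (Ne.symm h0)
          exact hpart1 a ⟨ha, ha1⟩ g hg
      rw [hBdecomp]
      simp_rw [hterm]
      rw [ENNReal.tsum_mul_left, hsum1, mul_one]
      have h2 : Set.Iic a ∩ Set.Icc (0 : ℝ) 1 = Set.Icc 0 a := by
        ext x
        simp only [Set.mem_inter_iff, Set.mem_Iic, Set.mem_Icc]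
        constructor
        · rintro ⟨hx, hx0, _⟩; exact ⟨hx0, hx⟩
        · rintro ⟨hx0, hxa⟩; exact ⟨hxa, hx0, le_trans hxa ha1⟩
      rw [h2, Real.volume_Icc, sub_zero]
    · -- a > 1
      have h1 : B = Set.univ := by
        ext ω
        simp only [hB_def, Set.mem_preimage, Set.mem_Iic, Set.mem_univ, iff_true]
        exact le_trans (hQ01 (G ω) (S ω)).2 ha1.le
      have h2 : Set.Iic a ∩ Set.Icc (0 : ℝ) 1 = Set.Icc 0 1 := by
        ext x
        simp only [Set.mem_inter_iff, Set.mem_Iic, Set.mem_Icc]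
        constructor
        · rintro ⟨_, h⟩; exact h
        · rintro ⟨hx0, hx1⟩; exact ⟨le_trans hx1 ha1.le, hx0, hx1⟩
      rw [h1, h2, measure_univ, Real.volume_Icc]
      norm_num
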